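/- Let g be the 6-dimensional nilpotent Lie algebra with structure (0,0,0,12,14,15+23+24) as above, and let ω = A·α₁₃ + B·α₁₅ + C·α₂₃ + D·(α₁₆+α₂₅−α₃₄) + E·(α₂₆−α₄₅) be a closed 2-form in the Chevalley–Eilenberg complex. Then ω³ ≠ 0 if and only if AE² + BDE − CDE − D³ ≠ 0. -/

import Mathlib

set_option synthInstance.maxHeartbeats 1000000
set_option maxHeartbeats 1000000
set_option maxRecDepth 10000

theorem epsne : (ExteriorAlgebra.ιMulti ℝ 6 (fun i : Fin 6 => Pi.single i (1:ℝ))) ≠ 0 := by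
  intro h
  set f : ∀ i, (Fin 6 → ℝ) [⋀^Fin i]→ₗ[ℝ] ℝ :=
    Function.update (fun _ => 0) 6 Matrix.detRowAlternating with hf
  have key := ExteriorAlgebra.liftAlternating_apply_ιMulti f (fun i : Fin 6 => Pi.single i (1:ℝ))
  rw [h, map_zero] at key
  have h6 : f 6 = Matrix.detRowAlternating := by rw [hf]; simp
  rw [h6] at key
  have hid : (fun i : Fin 6 => Pi.single i (1:ℝ)) = (1 : Matrix (Fin 6) (Fin 6) ℝ) := by
    funext i j
    simp [Matrix.one_apply, Pi.single_apply, eq_comm]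
  rw [hid] at key
  have hd1 : Matrix.detRowAlternating (1 : Matrix (Fin 6) (Fin 6) ℝ) = 1 := by
    exact Matrix.det_one
  rw [hd1] at key
  exact zero_ne_one key

/-- In the Chevalley–Eilenberg complex of the 6-dimensional nilpotent Lie
algebra with structure `(0,0,0,12,14,15+23+24)` (dual generators `α₁,…,α₆`, differential as
in `h1`–`h6`, antiderivation property `hleib`), let
`ω = A·α₁₃ + B·α₁₅ + C·α₂₃ + D·(α₁₆+α₂₅−α₃₄) + E·(α₂₆−α₄₅)` be a closed 2-form.  Then
`ω³ ≠ 0` (i.e. `ω` is nondegenerate, hence symplectic) if and only if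
`A·E² + B·D·E − C·D·E − D³ ≠ 0`. -/
theorem symplectic_condition (d : Module.End ℝ (ExteriorAlgebra ℝ (Fin 6 → ℝ)))
    (α : Fin 6 → ExteriorAlgebra ℝ (Fin 6 → ℝ))
    (hα : ∀ i, α i = ExteriorAlgebra.ι ℝ (Pi.single i (1 : ℝ)))
    (hone : d 1 = 0)
    (hleib : ∀ (v : Fin 6 → ℝ) (x : ExteriorAlgebra ℝ (Fin 6 → ℝ)),
      d (ExteriorAlgebra.ι ℝ v * x)
        = d (ExteriorAlgebra.ι ℝ v) * x - ExteriorAlgebra.ι ℝ v * d x)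
    (h1 : d (α 0) = 0) (h2 : d (α 1) = 0) (h3 : d (α 2) = 0)
    (h4 : d (α 3) = α 0 * α 1) (h5 : d (α 4) = α 0 * α 3)
    (h6 : d (α 5) = α 0 * α 4 + α 1 * α 2 + α 1 * α 3)
    (A B C D E : ℝ) (ω : ExteriorAlgebra ℝ (Fin 6 → ℝ))
    (hω : ω = A • (α 0 * α 2) + B • (α 0 * α 4) + C • (α 1 * α 2)
        + D • (α 0 * α 5 + α 1 * α 4 - α 2 * α 3)
        + E • (α 1 * α 5 - α 3 * α 4))
    (hclosed : d ω = 0) :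
    ω * ω * ω ≠ 0 ↔ A * E ^ 2 + B * D * E - C * D * E - D ^ 3 ≠ 0 := by
  have hsq : ∀ i : Fin 6, α i * α i = 0 := fun i => by
    rw [hα i]; exact ExteriorAlgebra.ι_sq_zero _
  have hsw : ∀ i j : Fin 6, α i * α j = -(α j * α i) := fun i j => by
    rw [hα i, hα j]
    exact eq_neg_of_add_eq_zero_left
      (ExteriorAlgebra.ι_add_mul_swap (Pi.single i 1) (Pi.single j 1))
  have hsw2 : ∀ (i j : Fin 6), j < i → α i * α j = -(α j * α i) := fun i j _ => hsw i j
  have hsw' : ∀ (i j : Fin 6), j < i →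
      ∀ x : ExteriorAlgebra ℝ (Fin 6 → ℝ), α i * (α j * x) = -(α j * (α i * x)) := by
    intro i j _ x
    rw [← mul_assoc, hsw i j, neg_mul, mul_assoc]
  have hsq' : ∀ (i : Fin 6) (x : ExteriorAlgebra ℝ (Fin 6 → ℝ)), α i * (α i * x) = 0 := by
    intro i x
    rw [← mul_assoc, hsq, zero_mul]
  have hε : α 0 * (α 1 * (α 2 * (α 3 * (α 4 * α 5)))) ≠ 0 := by
    have heq : α 0 * (α 1 * (α 2 * (α 3 * (α 4 * α 5))))
        = ExteriorAlgebra.ιMulti ℝ 6 (fun i : Fin 6 => Pi.single i (1:ℝ)) := by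
      rw [ExteriorAlgebra.ιMulti_apply]
      simp [List.ofFn_succ, hα]
    rw [heq]
    exact epsne
  have hcube : ω * ω * ω
      = (6 * (A * E ^ 2 + B * D * E - C * D * E - D ^ 3))
          • (α 0 * (α 1 * (α 2 * (α 3 * (α 4 * α 5))))) := by
    rw [hω]
    simp only [smul_add, smul_sub, mul_add, add_mul, mul_sub, sub_mul, smul_mul_assoc,
      mul_smul_comm, mul_assoc, smul_smul, mul_neg, neg_mul, smul_neg, neg_neg]
    simp only [hsw' 1 0 (by decide), hsw' 2 0 (by decide), hsw' 2 1 (by decide), hsw' 3 0 (by decide), hsw' 3 1 (by decide), hsw' 3 2 (by decide), hsw' 4 0 (by decide), hsw' 4 1 (by decide), hsw' 4 2 (by decide), hsw' 4 3 (by decide), hsw' 5 0 (by decide), hsw' 5 1 (by decide), hsw' 5 2 (by decide), hsw' 5 3 (by decide), hsw' 5 4 (by decide), hsw2 1 0 (by decide), hsw2 2 0 (by decide), hsw2 2 1 (by decide), hsw2 3 0 (by decide), hsw2 3 1 (by decide), hsw2 3 2 (by decide), hsw2 4 0 (by decide), hsw2 4 1 (by decide), hsw2 4 2 (by decide), hsw2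 4 3 (by decide), hsw2 5 0 (by decide), hsw2 5 1 (by decide), hsw2 5 2 (by decide), hsw2 5 3 (by decide), hsw2 5 4 (by decide), hsq, hsq',
      mul_neg, neg_mul, mul_zero, zero_mul, smul_zero, neg_zero, add_zero, zero_add,
      smul_neg, neg_neg, sub_zero, zero_sub]
    match_scalars <;> ring
  rw [hcube, smul_ne_zero_iff]
  constructor
  · rintro ⟨hc, -⟩ hp
    exact hc (by rw [hp, mul_zero])
  · intro hp
    exact ⟨mul_ne_zero (by norm_num) hp, hε⟩
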